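/- Let f_w be an l-layer GCN (l ≥ 2) with nonzero weight matrices W_1,…,W_l, and let ΔW_1,…,ΔW_l be perturbation matrices of matching sizes with ‖ΔW_i‖₂ ≤ ‖W_i‖₂ / l for all i ∈ [l]. Then for any graph G = (X, A) on n nodes with ‖X‖₂ ≤ B and any pair of classes i, j ∈ [K]: |M(f_{w+Δw}(G), i, j) − M(f_w(G), i, j)| ≤ 2e · B · (∏_{i=1}^l ‖W_i‖₂) · Σ_{i=1}^l (‖ΔW_i‖₂ / ‖W_i‖₂). -/

import Mathlib

open MeasureTheory Matrix Finset

noncomputable section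

/-- Spectral norm of a real matrix: the operator norm induced by Euclidean vector norms. -/
def specNorm {m n : Type*} [Fintype m] [Fintype n] [DecidableEq n] (A : Matrix m n ℝ) : ℝ :=
  ‖LinearMap.toContinuousLinearMap (Matrix.toEuclideanLin A)‖

/-- Frobenius norm of a real matrix. -/
def frobNorm {m n : Type*} [Fintype m] [Fintype n] (A : Matrix m n ℝ) : ℝ :=
  Real.sqrt (∑ i, ∑ j, (A i j) ^ 2)

/-- Euclidean norm of a finite real vector. -/
def euclNorm {n : Type*} [Fintype n] (v : n → ℝ) : ℝ :=
  Real.sqrt (∑ i, (v i) ^ 2)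

/-- Entrywise ReLU on a matrix. -/
def relu {m k : Type*} (M : Matrix m k ℝ) : Matrix m k ℝ := M.map (fun x => max x 0)

/-- Node representations of a GCN: `H_0 = X`, `H_{k+1} = σ(P H_k W_{k+1})`
(we index weights from `0`, so `W k` is the paper's `W_{k+1}`). -/
def gcnRep {n : ℕ} (d : ℕ → ℕ) (W : ∀ k : ℕ, Matrix (Fin (d k)) (Fin (d (k + 1))) ℝ)
    (P : Matrix (Fin n) (Fin n) ℝ) (X : Matrix (Fin n) (Fin (d 0)) ℝ) :
    (k : ℕ) → Matrix (Fin n) (Fin (d k)) ℝ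
  | 0 => X
  | (k + 1) => relu (P * gcnRep d W P X k * W k)

/-- Output (readout) of an `l`-layer GCN: `f_w(G) = H_l = (1/n) 1_n H_{l-1} W_l`. -/
def gcnOut {n : ℕ} (d : ℕ → ℕ) (W : ∀ k : ℕ, Matrix (Fin (d k)) (Fin (d (k + 1))) ℝ)
    (P : Matrix (Fin n) (Fin n) ℝ) (X : Matrix (Fin n) (Fin (d 0)) ℝ) :
    (l : ℕ) → Fin (d l) → ℝ
  | 0 => fun _ => 0
  | (l + 1) => fun j => (n : ℝ)⁻¹ * ∑ i, (gcnRep d W P X l * W l) i j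

/-- Normalized graph Laplacian `P_G = D̃^{-1/2} Ã D̃^{-1/2}` with `Ã = A + I` and
`D̃ = diag(∑_j Ã_{ij})`, written entrywise. -/
def gcnLap {n : ℕ} (A : Matrix (Fin n) (Fin n) ℝ) : Matrix (Fin n) (Fin n) ℝ :=
  Matrix.of fun i j =>
    (A + 1) i j / (Real.sqrt (∑ k, (A + 1) i k) * Real.sqrt (∑ k, (A + 1) j k))

section Aux

variable {m n p : Type*} [Fintype m] [Fintype n] [Fintype p]

lemma euclNorm_nonneg (v : n → ℝ) : 0 ≤ euclNorm v := Real.sqrt_nonneg _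

lemma euclNorm_eq_norm (v : n → ℝ) : euclNorm v = ‖(WithLp.equiv 2 (n → ℝ)).symm v‖ := by
  rw [EuclideanSpace.norm_eq]
  unfold euclNorm
  congr 1
  refine Finset.sum_congr rfl fun i _ => ?_
  rw [WithLp.equiv_symm_apply, PiLp.toLp_apply, Real.norm_eq_abs, sq_abs]

lemma euclNorm_sq (v : n → ℝ) : euclNorm v ^ 2 = ∑ i, v i ^ 2 :=
  Real.sq_sqrt (Finset.sum_nonneg fun i _ => sq_nonneg _)

variable [DecidableEq n]

lemma specNorm_nonneg (A : Matrix m n ℝ) : 0 ≤ specNorm A := norm_nonneg _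

lemma euclNorm_mulVec_le (A : Matrix m n ℝ) (v : n → ℝ) :
    euclNorm (A *ᵥ v) ≤ specNorm A * euclNorm v := by
  have h := (LinearMap.toContinuousLinearMap (Matrix.toEuclideanLin A)).le_opNorm
    ((WithLp.equiv 2 (n → ℝ)).symm v)
  rw [euclNorm_eq_norm, euclNorm_eq_norm]
  simpa [WithLp.equiv_symm_apply, Matrix.toEuclideanLin_apply_piLp_toLp, specNorm] using h

lemma specNorm_le_bound (A : Matrix m n ℝ) {c : ℝ} (hc : 0 ≤ c)
    (h : ∀ v : n → ℝ, euclNorm (A *ᵥ v) ≤ c * euclNorm v) : specNorm A ≤ c := by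
  apply ContinuousLinearMap.opNorm_le_bound _ hc
  intro x
  have h2 := h (WithLp.equiv 2 (n → ℝ) x)
  rw [euclNorm_eq_norm, euclNorm_eq_norm] at h2
  simpa [Matrix.toEuclideanLin_apply] using h2

lemma specNorm_pos {A : Matrix m n ℝ} (h : A ≠ 0) : 0 < specNorm A := by
  rcases (specNorm_nonneg A).lt_or_eq with h' | h'
  · exact h'
  · exfalso
    apply h
    have h0 : LinearMap.toContinuousLinearMap (Matrix.toEuclideanLin A) = 0 := by
      rwa [eq_comm, specNorm, norm_eq_zero] at h'
    have h1 : Matrix.toEuclideanLin A = 0 := by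
      apply LinearMap.toContinuousLinearMap.injective
      simpa using h0
    apply Matrix.toEuclideanLin.injective
    simpa using h1

lemma specNorm_transpose [DecidableEq m] (A : Matrix m n ℝ) : specNorm Aᵀ = specNorm A := by
  have h : Aᵀ = Aᴴ := by ext i j; simp [Matrix.conjTranspose_apply]
  rw [h]
  unfold specNorm
  rw [Matrix.toEuclideanLin_conjTranspose_eq_adjoint, LinearMap.adjoint_toContinuousLinearMap]
  exact LinearIsometryEquiv.norm_map ContinuousLinearMap.adjoint _

lemma specNorm_add_le (A B : Matrix m n ℝ) : specNorm (A + B) ≤ specNorm A + specNorm B := by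
  unfold specNorm
  rw [map_add, map_add]
  exact norm_add_le _ _

end Aux

section Frob
variable {m n p : Type*} [Fintype m] [Fintype n] [Fintype p]

lemma frobNorm_nonneg (A : Matrix m n ℝ) : 0 ≤ frobNorm A := Real.sqrt_nonneg _

lemma frobNorm_sq (A : Matrix m n ℝ) : frobNorm A ^ 2 = ∑ i, ∑ j, (A i j) ^ 2 :=
  Real.sq_sqrt (by positivity)

lemma frobNorm_le_of_sq_le {A : Matrix m n ℝ} {c : ℝ} (hc : 0 ≤ c)
    (h : ∑ i, ∑ j, (A i j) ^ 2 ≤ c ^ 2) : frobNorm A ≤ c := by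
  rw [frobNorm, ← Real.sqrt_sq hc]
  exact Real.sqrt_le_sqrt h

lemma frobNorm_transpose (A : Matrix m n ℝ) : frobNorm Aᵀ = frobNorm A := by
  unfold frobNorm
  congr 1
  rw [Finset.sum_comm]
  rfl

lemma frob_mul_spec_left [DecidableEq n] (A : Matrix m n ℝ) (B : Matrix n p ℝ) :
    frobNorm (A * B) ≤ specNorm A * frobNorm B := by
  apply frobNorm_le_of_sq_le (mul_nonneg (specNorm_nonneg _) (frobNorm_nonneg _))
  have key : ∀ j, ∑ i, ((A * B) i j) ^ 2 ≤ specNorm A ^ 2 * ∑ i, (B i j) ^ 2 := by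
    intro j
    have h1 : ∀ i, (A * B) i j = (A *ᵥ fun k => B k j) i := by
      intro i; simp [Matrix.mul_apply, Matrix.mulVec, dotProduct]
    have h2 : ∑ i, ((A * B) i j) ^ 2 = euclNorm (A *ᵥ fun k => B k j) ^ 2 := by
      rw [euclNorm_sq]
      exact Finset.sum_congr rfl fun i _ => by rw [h1]
    rw [h2]
    calc euclNorm (A *ᵥ fun k => B k j) ^ 2
        ≤ (specNorm A * euclNorm fun k => B k j) ^ 2 :=
          pow_le_pow_left₀ (euclNorm_nonneg _) (euclNorm_mulVec_le _ _) 2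
      _ = specNorm A ^ 2 * ∑ i, (B i j) ^ 2 := by rw [mul_pow, euclNorm_sq]
  calc ∑ i, ∑ j, ((A * B) i j) ^ 2 = ∑ j, ∑ i, ((A * B) i j) ^ 2 := by rw [Finset.sum_comm]

    _ ≤ ∑ j, specNorm A ^ 2 * ∑ i, (B i j) ^ 2 := Finset.sum_le_sum fun j _ => key j
    _ = specNorm A ^ 2 * ∑ j, ∑ i, (B i j) ^ 2 := (Finset.mul_sum _ _ _).symm
    _ = (specNorm A * frobNorm B) ^ 2 := by
        rw [mul_pow, frobNorm_sq, Finset.sum_comm]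

lemma frob_mul_spec_right [DecidableEq n] [DecidableEq m] [DecidableEq p]
    (A : Matrix m n ℝ) (B : Matrix n p ℝ) :
    frobNorm (A * B) ≤ frobNorm A * specNorm B := by
  rw [← frobNorm_transpose (A * B), Matrix.transpose_mul]
  calc frobNorm (Bᵀ * Aᵀ) ≤ specNorm Bᵀ * frobNorm Aᵀ := frob_mul_spec_left _ _
    _ = frobNorm A * specNorm B := by rw [specNorm_transpose, frobNorm_transpose, mul_comm]

lemma frobNorm_relu_sub_relu_le (M N : Matrix m n ℝ) :
    frobNorm (relu M - relu N) ≤ frobNorm (M - N) := by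
  apply frobNorm_le_of_sq_le (frobNorm_nonneg _)
  rw [frobNorm_sq]
  refine Finset.sum_le_sum fun i _ => Finset.sum_le_sum fun j _ => ?_
  simp only [Matrix.sub_apply, relu, Matrix.map_apply]
  rw [← sq_abs (max (M i j) 0 - max (N i j) 0), ← sq_abs (M i j - N i j)]
  exact pow_le_pow_left₀ (abs_nonneg _) (abs_max_sub_max_le_abs (M i j) (N i j) 0) 2

lemma frobNorm_relu_le (M : Matrix m n ℝ) : frobNorm (relu M) ≤ frobNorm M := by
  apply frobNorm_le_of_sq_le (frobNorm_nonneg _)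
  rw [frobNorm_sq]
  refine Finset.sum_le_sum fun i _ => Finset.sum_le_sum fun j _ => ?_
  simp only [relu, Matrix.map_apply]
  rcases le_total (M i j) 0 with h | h
  · rw [max_eq_right h]; simpa using sq_nonneg (M i j)
  · rw [max_eq_left h]

lemma euclNorm_add_le (u v : n → ℝ) : euclNorm (u + v) ≤ euclNorm u + euclNorm v := by
  rw [euclNorm_eq_norm, euclNorm_eq_norm, euclNorm_eq_norm]
  exact norm_add_le ((WithLp.equiv 2 (n → ℝ)).symm u) ((WithLp.equiv 2 (n → ℝ)).symm v)

lemma frobNorm_eq_eucl (A : Matrix m n ℝ) :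
    frobNorm A = euclNorm (fun q : m × n => A q.1 q.2) := by
  unfold frobNorm euclNorm
  rw [Fintype.sum_prod_type]

lemma frobNorm_add_le (A B : Matrix m n ℝ) : frobNorm (A + B) ≤ frobNorm A + frobNorm B := by
  rw [frobNorm_eq_eucl, frobNorm_eq_eucl, frobNorm_eq_eucl]
  exact euclNorm_add_le _ _

lemma euclNorm_single [DecidableEq m] (i : m) : euclNorm (Pi.single i (1 : ℝ)) = 1 := by
  unfold euclNorm
  have h : (∑ k : m, ((Pi.single i (1:ℝ) : m → ℝ) k) ^ 2) = 1 := by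
    rw [Finset.sum_eq_single i]
    · simp
    · intro k _ hk; simp [Pi.single_apply, hk]
    · simp
  rw [h, Real.sqrt_one]

lemma frobNorm_le_sqrt_card_mul_specNorm [DecidableEq m] [DecidableEq n] (X : Matrix m n ℝ) :
    frobNorm X ≤ Real.sqrt (Fintype.card m) * specNorm X := by
  apply frobNorm_le_of_sq_le (mul_nonneg (Real.sqrt_nonneg _) (specNorm_nonneg _))
  rw [mul_pow, Real.sq_sqrt (by positivity)]
  have hrow : ∀ i, ∑ j, (X i j) ^ 2 ≤ specNorm X ^ 2 := by
    intro i
    have h1 : ∀ j, X i j = (Xᵀ *ᵥ Pi.single i (1:ℝ)) j := by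
      intro j
      simp only [Matrix.mulVec, dotProduct, Matrix.transpose_apply]
      rw [Finset.sum_eq_single i]
      · simp
      · intro k _ hk; simp [Pi.single_apply, hk]
      · simp
    calc ∑ j, (X i j) ^ 2 = euclNorm (Xᵀ *ᵥ Pi.single i (1:ℝ)) ^ 2 := by
          rw [euclNorm_sq]; exact Finset.sum_congr rfl fun j _ => by rw [h1]
      _ ≤ (specNorm Xᵀ * euclNorm (Pi.single i (1:ℝ))) ^ 2 :=
          pow_le_pow_left₀ (euclNorm_nonneg _) (euclNorm_mulVec_le _ _) 2
      _ = specNorm X ^ 2 := by rw [specNorm_transpose, euclNorm_single, mul_one]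
  calc ∑ i, ∑ j, (X i j) ^ 2 ≤ ∑ _i : m, specNorm X ^ 2 :=
        Finset.sum_le_sum fun i _ => hrow i
    _ = (Fintype.card m : ℝ) * specNorm X ^ 2 := by
        rw [Finset.sum_const, Finset.card_univ, nsmul_eq_mul]

lemma abs_col_sum_le (D : Matrix m n ℝ) (t : n) :
    |∑ r, D r t| ≤ Real.sqrt (Fintype.card m) * frobNorm D := by
  have h1 : (∑ r, D r t) ^ 2 ≤ (Fintype.card m : ℝ) * ∑ r, (D r t) ^ 2 := by
    have := Finset.sum_mul_sq_le_sq_mul_sq Finset.univ (fun _ : m => (1 : ℝ)) (fun r => D r t)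
    simpa [Finset.card_univ] using this
  have h2 : ∑ r, (D r t) ^ 2 ≤ ∑ r, ∑ j, (D r j) ^ 2 :=
    Finset.sum_le_sum fun r _ =>
      Finset.single_le_sum (f := fun j => (D r j) ^ 2) (fun j _ => sq_nonneg _) (Finset.mem_univ t)
  calc |∑ r, D r t| = Real.sqrt ((∑ r, D r t) ^ 2) := (Real.sqrt_sq_eq_abs _).symm
    _ ≤ Real.sqrt ((Fintype.card m : ℝ) * ∑ r, ∑ j, (D r j) ^ 2) := by
        apply Real.sqrt_le_sqrt
        exact h1.trans (mul_le_mul_of_nonneg_left h2 (by positivity))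
    _ = Real.sqrt (Fintype.card m) * frobNorm D := Real.sqrt_mul (by positivity) _

end Frob

lemma lap_bound {n : ℕ} (aa : Matrix (Fin n) (Fin n) ℝ) (hnn : ∀ i j, 0 ≤ aa i j)
    (hsym : ∀ i j, aa i j = aa j i) (hdpos : ∀ i, 0 < ∑ k, aa i k) :
    specNorm (Matrix.of fun i j =>
      aa i j / (Real.sqrt (∑ k, aa i k) * Real.sqrt (∑ k, aa j k))) ≤ 1 := by
  have hsq : ∀ i, Real.sqrt (∑ k, aa i k) ≠ 0 := fun i => (Real.sqrt_pos.2 (hdpos i)).ne'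
  apply specNorm_le_bound _ zero_le_one
  intro v
  rw [one_mul]
  unfold euclNorm
  apply Real.sqrt_le_sqrt
  have step1 : ∀ i, ((Matrix.of fun i j =>
      aa i j / (Real.sqrt (∑ k, aa i k) * Real.sqrt (∑ k, aa j k))) *ᵥ v) i ^ 2 ≤
      ∑ j, aa i j * v j ^ 2 / (∑ k, aa j k) := by
    intro i
    have he : ((Matrix.of fun i j =>
        aa i j / (Real.sqrt (∑ k, aa i k) * Real.sqrt (∑ k, aa j k))) *ᵥ v) i =
        (Real.sqrt (∑ k, aa i k))⁻¹ *
          ∑ j, Real.sqrt (aa i j) * (Real.sqrt (aa i j) * v j / Real.sqrt (∑ k, aa j k)) := by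
      rw [Finset.mul_sum]
      simp only [Matrix.mulVec, dotProduct, Matrix.of_apply]
      refine Finset.sum_congr rfl fun j _ => ?_
      have h2 : Real.sqrt (aa i j) * Real.sqrt (aa i j) = aa i j := Real.mul_self_sqrt (hnn i j)
      rw [show Real.sqrt (aa i j) * (Real.sqrt (aa i j) * v j / Real.sqrt (∑ k, aa j k)) =
          (Real.sqrt (aa i j) * Real.sqrt (aa i j)) * v j / Real.sqrt (∑ k, aa j k) by ring, h2]
      field_simp
    have hcs : (∑ j, Real.sqrt (aa i j) * (Real.sqrt (aa i j) * v j / Real.sqrt (∑ k, aa j k))) ^ 2 ≤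
        (∑ k, aa i k) * ∑ j, aa i j * v j ^ 2 / (∑ k, aa j k) := by
      have h := Finset.sum_mul_sq_le_sq_mul_sq Finset.univ (fun j => Real.sqrt (aa i j))
        (fun j => Real.sqrt (aa i j) * v j / Real.sqrt (∑ k, aa j k))
      refine le_trans h (le_of_eq ?_)
      congr 1
      · exact Finset.sum_congr rfl fun k _ => Real.sq_sqrt (hnn i k)
      · refine Finset.sum_congr rfl fun j _ => ?_
        rw [div_pow, mul_pow, Real.sq_sqrt (hnn i j), Real.sq_sqrt (hdpos j).le]
    rw [he, mul_pow]
    have hinv : ((Real.sqrt (∑ k, aa i k))⁻¹) ^ 2 = (∑ k, aa i k)⁻¹ := by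
      rw [inv_pow, Real.sq_sqrt (hdpos i).le]
    rw [hinv]
    calc (∑ k, aa i k)⁻¹ *
          (∑ j, Real.sqrt (aa i j) * (Real.sqrt (aa i j) * v j / Real.sqrt (∑ k, aa j k))) ^ 2 ≤
        (∑ k, aa i k)⁻¹ * ((∑ k, aa i k) * ∑ j, aa i j * v j ^ 2 / (∑ k, aa j k)) :=
          mul_le_mul_of_nonneg_left hcs (inv_nonneg.2 (hdpos i).le)
      _ = ∑ j, aa i j * v j ^ 2 / (∑ k, aa j k) := inv_mul_cancel_left₀ (hdpos i).ne' _
  have step2 : ∑ i, ∑ j, aa i j * v j ^ 2 / (∑ k, aa j k) = ∑ j, v j ^ 2 := by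
    rw [Finset.sum_comm]
    refine Finset.sum_congr rfl fun j _ => ?_
    have hsum : ∑ i, aa i j = ∑ k, aa j k := Finset.sum_congr rfl fun i _ => hsym i j
    calc ∑ i, aa i j * v j ^ 2 / (∑ k, aa j k)
        = (∑ i, aa i j) * (v j ^ 2 / (∑ k, aa j k)) := by
          rw [Finset.sum_mul]
          exact Finset.sum_congr rfl fun i _ => by ring
      _ = (∑ k, aa j k) * (v j ^ 2 / (∑ k, aa j k)) := by rw [hsum]
      _ = v j ^ 2 := mul_div_cancel₀ _ (hdpos j).ne'
  calc ∑ i, ((Matrix.of fun i j =>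
        aa i j / (Real.sqrt (∑ k, aa i k) * Real.sqrt (∑ k, aa j k))) *ᵥ v) i ^ 2 ≤
      ∑ i, ∑ j, aa i j * v j ^ 2 / (∑ k, aa j k) := Finset.sum_le_sum fun i _ => step1 i
    _ = ∑ j, v j ^ 2 := step2

lemma specNorm_gcnLap_le {n : ℕ} (A : Matrix (Fin n) (Fin n) ℝ) (hsymm : A.IsSymm)
    (h0 : ∀ i j, 0 ≤ A i j) : specNorm (gcnLap A) ≤ 1 := by
  have hnn : ∀ i j, 0 ≤ (A + 1) i j := by
    intro i j
    simp only [Matrix.add_apply, Matrix.one_apply]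
    split
    · linarith [h0 i j]
    · simpa using h0 i j
  have hsym : ∀ i j, (A + 1) i j = (A + 1) j i := by
    intro i j
    simp only [Matrix.add_apply, Matrix.one_apply]
    rw [hsymm.apply i j]
    congr 1
    simp [eq_comm]
  have hdpos : ∀ i, 0 < ∑ k, (A + 1) i k := by
    intro i
    have h1 : (A + 1) i i ≤ ∑ k, (A + 1) i k :=
      Finset.single_le_sum (fun k _ => hnn i k) (Finset.mem_univ i)
    have h2 : (0:ℝ) < (A + 1) i i := by
      simp only [Matrix.add_apply, Matrix.one_apply_eq]
      linarith [h0 i i]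
    linarith
  exact lap_bound (A + 1) hnn hsym hdpos

set_option maxHeartbeats 1000000 in
/-- Perturbation bound for the pairwise margin operator
`M(f_w(G), i, j) = f_w(G)_i - f_w(G)_j` of an `l`-layer GCN: if `‖ΔW_i‖₂ ≤ ‖W_i‖₂/l` for
all `i` and `‖X‖₂ ≤ B`, then
`|M(f_{w+Δw}(G),i,j) − M(f_w(G),i,j)| ≤ 2 e B (∏‖W_i‖₂) Σ ‖ΔW_i‖₂/‖W_i‖₂`. -/
theorem gcn_margin_pert_le (n l : ℕ) (hn : 0 < n) (hl : 2 ≤ l) (d : ℕ → ℕ)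
    (W ΔW : ∀ k : ℕ, Matrix (Fin (d k)) (Fin (d (k + 1))) ℝ)
    (hW : ∀ k, k < l → W k ≠ 0)
    (hΔ : ∀ k, k < l → specNorm (ΔW k) ≤ specNorm (W k) / l)
    (X : Matrix (Fin n) (Fin (d 0)) ℝ) (A : Matrix (Fin n) (Fin n) ℝ)
    (hsymm : A.IsSymm) (h01 : ∀ i j, A i j = 0 ∨ A i j = 1)
    (B : ℝ) (hX : specNorm X ≤ B) (i j : Fin (d l)) :
    |(gcnOut d (fun k => W k + ΔW k) (gcnLap A) X l i -
        gcnOut d (fun k => W k + ΔW k) (gcnLap A) X l j) -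
      (gcnOut d W (gcnLap A) X l i - gcnOut d W (gcnLap A) X l j)| ≤
      2 * Real.exp 1 * B * (∏ k ∈ Finset.range l, specNorm (W k)) *
        (∑ k ∈ Finset.range l, specNorm (ΔW k) / specNorm (W k)) := by
  have hl1 : 1 ≤ l := le_trans one_le_two hl
  have hlR : (0:ℝ) < l := by exact_mod_cast Nat.lt_of_lt_of_le Nat.zero_lt_two hl
  set P : Matrix (Fin n) (Fin n) ℝ := gcnLap A with hPdef
  have hP : specNorm P ≤ 1 :=
    specNorm_gcnLap_le A hsymm (fun i' j' => by rcases h01 i' j' with h | h <;> simp [h])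
  have hB : 0 ≤ B := le_trans (specNorm_nonneg X) hX
  set W' : ∀ k : ℕ, Matrix (Fin (d k)) (Fin (d (k + 1))) ℝ := fun k => W k + ΔW k with hW'def
  have hbpos : ∀ k, k < l → 0 < specNorm (W k) := fun k hk => specNorm_pos (hW k hk)
  have hδnn : ∀ k : ℕ, 0 ≤ specNorm (ΔW k) := fun k => specNorm_nonneg _
  have hc1 : (1:ℝ) ≤ 1 + 1/l := by
    have : (0:ℝ) ≤ 1/l := by positivity
    linarith
  have hc0 : (0:ℝ) ≤ 1 + 1/l := by linarith
  have hW'le : ∀ k, k < l → specNorm (W' k) ≤ specNorm (W k) * (1 + 1/l) := by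
    intro k hk
    calc specNorm (W' k) ≤ specNorm (W k) + specNorm (ΔW k) := specNorm_add_le _ _
      _ ≤ specNorm (W k) + specNorm (W k) / l := by linarith [hΔ k hk]
      _ = specNorm (W k) * (1 + 1/l) := by ring
  have hΦnn : ∀ k : ℕ, 0 ≤ ∏ t ∈ Finset.range k, specNorm (W t) :=
    fun k => Finset.prod_nonneg fun t _ => specNorm_nonneg _
  have hSnn : ∀ k : ℕ, 0 ≤ ∑ t ∈ Finset.range k, specNorm (ΔW t) / specNorm (W t) :=
    fun k => Finset.sum_nonneg fun t _ => div_nonneg (hδnn t) (specNorm_nonneg _)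
  have hsnn : (0:ℝ) ≤ Real.sqrt n := Real.sqrt_nonneg _
  -- bound on unperturbed representations
  have boundA : ∀ k : ℕ, k ≤ l → frobNorm (gcnRep d W P X k) ≤
      Real.sqrt n * B * ∏ t ∈ Finset.range k, specNorm (W t) := by
    intro k
    induction k with
    | zero =>
      intro _
      simp only [gcnRep, Finset.range_zero, Finset.prod_empty, mul_one]
      calc frobNorm X ≤ Real.sqrt n * specNorm X := by
            have h := frobNorm_le_sqrt_card_mul_specNorm X
            simpa [Fintype.card_fin] using h
        _ ≤ Real.sqrt n * B := mul_le_mul_of_nonneg_left hX hsnn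
    | succ k ih =>
      intro hk1
      have hk : k < l := hk1
      have ihk := ih (Nat.le_of_lt hk)
      have h1 : frobNorm (gcnRep d W P X (k+1)) ≤
          frobNorm (P * gcnRep d W P X k * W k) := by
        simp only [gcnRep]
        exact frobNorm_relu_le _
      calc frobNorm (gcnRep d W P X (k+1)) ≤ frobNorm (P * gcnRep d W P X k * W k) := h1
        _ ≤ frobNorm (P * gcnRep d W P X k) * specNorm (W k) := frob_mul_spec_right _ _
        _ ≤ (specNorm P * frobNorm (gcnRep d W P X k)) * specNorm (W k) :=
            mul_le_mul_of_nonneg_right (frob_mul_spec_left _ _) (specNorm_nonneg _)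
        _ ≤ (1 * (Real.sqrt n * B * ∏ t ∈ Finset.range k, specNorm (W t))) * specNorm (W k) := by
            apply mul_le_mul_of_nonneg_right _ (specNorm_nonneg _)
            exact mul_le_mul hP ihk (frobNorm_nonneg _) zero_le_one
        _ = Real.sqrt n * B * ∏ t ∈ Finset.range (k+1), specNorm (W t) := by
            rw [Finset.prod_range_succ]; ring
  -- key step bound
  have key : ∀ k : ℕ, k < l →
      frobNorm (gcnRep d W' P X k - gcnRep d W P X k) ≤
        Real.sqrt n * B * (∏ t ∈ Finset.range k, specNorm (W t)) * (1 + 1/l)^k *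
          ∑ t ∈ Finset.range k, specNorm (ΔW t) / specNorm (W t) →
      frobNorm (gcnRep d W' P X k * W' k - gcnRep d W P X k * W k) ≤
        Real.sqrt n * B * (∏ t ∈ Finset.range (k+1), specNorm (W t)) * (1 + 1/l)^(k+1) *
          ∑ t ∈ Finset.range (k+1), specNorm (ΔW t) / specNorm (W t) := by
    intro k hk hind
    set H := gcnRep d W P X k
    set H' := gcnRep d W' P X k
    have hsplit : H' * W' k - H * W k = (H' - H) * W' k + H * ΔW k := by
      have h1 : H * W' k = H * W k + H * ΔW k := by
        have h2 : W' k = W k + ΔW k := rfl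
        rw [h2, Matrix.mul_add]
      rw [Matrix.sub_mul, h1]
      abel
    have hδb : specNorm (ΔW k) = specNorm (W k) * (specNorm (ΔW k) / specNorm (W k)) := by
      rw [mul_comm]
      exact (div_mul_cancel₀ _ (hbpos k hk).ne').symm
    calc frobNorm (H' * W' k - H * W k) = frobNorm ((H' - H) * W' k + H * ΔW k) := by rw [hsplit]
      _ ≤ frobNorm ((H' - H) * W' k) + frobNorm (H * ΔW k) := frobNorm_add_le _ _
      _ ≤ frobNorm (H' - H) * specNorm (W' k) + frobNorm H * specNorm (ΔW k) :=
          add_le_add (frob_mul_spec_right _ _) (frob_mul_spec_right _ _)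
      _ ≤ (Real.sqrt n * B * (∏ t ∈ Finset.range k, specNorm (W t)) * (1 + 1/l)^k *
            ∑ t ∈ Finset.range k, specNorm (ΔW t) / specNorm (W t)) *
            (specNorm (W k) * (1 + 1/l)) +
          (Real.sqrt n * B * ∏ t ∈ Finset.range k, specNorm (W t)) * specNorm (ΔW k) := by
          apply add_le_add
          · apply mul_le_mul hind (hW'le k hk) (specNorm_nonneg _)
            exact mul_nonneg (mul_nonneg (mul_nonneg (mul_nonneg hsnn hB) (hΦnn k))
              (pow_nonneg hc0 k)) (hSnn k)
          · apply mul_le_mul (boundA k (Nat.le_of_lt hk)) le_rfl (specNorm_nonneg _)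
            exact mul_nonneg (mul_nonneg hsnn hB) (hΦnn k)
      _ = Real.sqrt n * B * (∏ t ∈ Finset.range (k+1), specNorm (W t)) *
            ((1 + 1/l)^(k+1) * (∑ t ∈ Finset.range k, specNorm (ΔW t) / specNorm (W t)) +
              specNorm (ΔW k) / specNorm (W k)) := by
          rw [Finset.prod_range_succ, pow_succ]
          nth_rewrite 1 [hδb]
          ring
      _ ≤ Real.sqrt n * B * (∏ t ∈ Finset.range (k+1), specNorm (W t)) *
            ((1 + 1/l)^(k+1) * ((∑ t ∈ Finset.range k, specNorm (ΔW t) / specNorm (W t)) +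
              specNorm (ΔW k) / specNorm (W k))) := by
          apply mul_le_mul_of_nonneg_left _
            (mul_nonneg (mul_nonneg hsnn hB) (hΦnn (k+1)))
          rw [mul_add]
          apply add_le_add_right
          nth_rewrite 1 [show specNorm (ΔW k) / specNorm (W k) =
            1 * (specNorm (ΔW k) / specNorm (W k)) by ring]
          apply mul_le_mul_of_nonneg_right _ (div_nonneg (hδnn k) (specNorm_nonneg _))
          exact one_le_pow₀ hc1
      _ = Real.sqrt n * B * (∏ t ∈ Finset.range (k+1), specNorm (W t)) * (1 + 1/l)^(k+1) *
            ∑ t ∈ Finset.range (k+1), specNorm (ΔW t) / specNorm (W t) := by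
          rw [Finset.sum_range_succ]; ring
  -- bound on representation differences
  have boundB : ∀ k : ℕ, k ≤ l →
      frobNorm (gcnRep d W' P X k - gcnRep d W P X k) ≤
        Real.sqrt n * B * (∏ t ∈ Finset.range k, specNorm (W t)) * (1 + 1/l)^k *
          ∑ t ∈ Finset.range k, specNorm (ΔW t) / specNorm (W t) := by
    intro k
    induction k with
    | zero =>
      intro _
      simp [gcnRep, frobNorm]
    | succ k ih =>
      intro hk1
      have hk : k < l := hk1
      have hkey := key k hk (ih (Nat.le_of_lt hk))
      have h1 : gcnRep d W' P X (k+1) - gcnRep d W P X (k+1) =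
          relu (P * gcnRep d W' P X k * W' k) - relu (P * gcnRep d W P X k * W k) := by
        simp only [gcnRep]
      rw [h1]
      calc frobNorm (relu (P * gcnRep d W' P X k * W' k) - relu (P * gcnRep d W P X k * W k))
          ≤ frobNorm (P * gcnRep d W' P X k * W' k - P * gcnRep d W P X k * W k) :=
            frobNorm_relu_sub_relu_le _ _
        _ = frobNorm (P * (gcnRep d W' P X k * W' k - gcnRep d W P X k * W k)) := by
            rw [Matrix.mul_sub, Matrix.mul_assoc, Matrix.mul_assoc]
        _ ≤ specNorm P * frobNorm (gcnRep d W' P X k * W' k - gcnRep d W P X k * W k) :=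
            frob_mul_spec_left _ _
        _ ≤ 1 * (Real.sqrt n * B * (∏ t ∈ Finset.range (k+1), specNorm (W t)) * (1 + 1/l)^(k+1) *
              ∑ t ∈ Finset.range (k+1), specNorm (ΔW t) / specNorm (W t)) :=
            mul_le_mul hP hkey (frobNorm_nonneg _) zero_le_one
        _ = _ := one_mul _
  -- final assembly
  obtain ⟨m, rfl⟩ : ∃ m, l = m + 1 := ⟨l - 1, by omega⟩
  have hm : m < m + 1 := Nat.lt_succ_self m
  have hkeym := key m hm (boundB m (Nat.le_succ m))
  have hcol : ∀ t : Fin (d (m+1)),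
      |gcnOut d W' P X (m+1) t - gcnOut d W P X (m+1) t| ≤
        B * (∏ k ∈ Finset.range (m+1), specNorm (W k)) * (1 + 1/(m+1:ℕ))^(m+1) *
          ∑ k ∈ Finset.range (m+1), specNorm (ΔW k) / specNorm (W k) := by
    intro t
    have hD : gcnOut d W' P X (m+1) t - gcnOut d W P X (m+1) t =
        (n : ℝ)⁻¹ * ∑ r, (gcnRep d W' P X m * W' m - gcnRep d W P X m * W m) r t := by
      simp only [gcnOut]
      rw [← mul_sub, ← Finset.sum_sub_distrib]
      congr 1
    rw [hD, abs_mul, abs_of_nonneg (by positivity : (0:ℝ) ≤ ((n:ℝ))⁻¹)]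
    have habs := abs_col_sum_le (gcnRep d W' P X m * W' m - gcnRep d W P X m * W m) t
    rw [Fintype.card_fin] at habs
    calc (n:ℝ)⁻¹ * |∑ r, (gcnRep d W' P X m * W' m - gcnRep d W P X m * W m) r t|
        ≤ (n:ℝ)⁻¹ * (Real.sqrt n *
            frobNorm (gcnRep d W' P X m * W' m - gcnRep d W P X m * W m)) :=
          mul_le_mul_of_nonneg_left habs (by positivity)
      _ ≤ (n:ℝ)⁻¹ * (Real.sqrt n *
            (Real.sqrt n * B * (∏ k ∈ Finset.range (m+1), specNorm (W k)) * (1 + 1/(m+1:ℕ))^(m+1) *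
              ∑ k ∈ Finset.range (m+1), specNorm (ΔW k) / specNorm (W k))) := by
          apply mul_le_mul_of_nonneg_left _ (by positivity)
          exact mul_le_mul_of_nonneg_left hkeym hsnn
      _ = ((n:ℝ)⁻¹ * (Real.sqrt n * Real.sqrt n)) *
            (B * (∏ k ∈ Finset.range (m+1), specNorm (W k)) * (1 + 1/(m+1:ℕ))^(m+1) *
              ∑ k ∈ Finset.range (m+1), specNorm (ΔW k) / specNorm (W k)) := by ring
      _ = B * (∏ k ∈ Finset.range (m+1), specNorm (W k)) * (1 + 1/(m+1:ℕ))^(m+1) *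
            ∑ k ∈ Finset.range (m+1), specNorm (ΔW k) / specNorm (W k) := by
          rw [Real.mul_self_sqrt (by positivity), inv_mul_cancel₀ (by positivity : ((n:ℝ)) ≠ 0),
            one_mul]
  have hce : (1 + 1/((m+1:ℕ):ℝ))^(m+1) ≤ Real.exp 1 := by
    have h1 : (1:ℝ) + 1/((m+1:ℕ):ℝ) ≤ Real.exp (1/((m+1:ℕ):ℝ)) := by
      have := Real.add_one_le_exp (1/((m+1:ℕ):ℝ))
      linarith
    calc (1 + 1/((m+1:ℕ):ℝ))^(m+1) ≤ (Real.exp (1/((m+1:ℕ):ℝ)))^(m+1) :=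
        pow_le_pow_left₀ hc0 h1 (m+1)
      _ = Real.exp (((m+1:ℕ):ℝ) * (1/((m+1:ℕ):ℝ))) := (Real.exp_nat_mul _ _).symm
      _ = Real.exp 1 := by
          rw [mul_one_div, div_self (by positivity : ((m+1:ℕ):ℝ) ≠ 0)]
  have heq : (gcnOut d W' P X (m+1) i - gcnOut d W' P X (m+1) j) -
      (gcnOut d W P X (m+1) i - gcnOut d W P X (m+1) j) =
      (gcnOut d W' P X (m+1) i - gcnOut d W P X (m+1) i) -
        (gcnOut d W' P X (m+1) j - gcnOut d W P X (m+1) j) := by ring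
  rw [heq]
  calc |(gcnOut d W' P X (m+1) i - gcnOut d W P X (m+1) i) -
        (gcnOut d W' P X (m+1) j - gcnOut d W P X (m+1) j)| ≤
      |gcnOut d W' P X (m+1) i - gcnOut d W P X (m+1) i| +
        |gcnOut d W' P X (m+1) j - gcnOut d W P X (m+1) j| := abs_sub _ _
    _ ≤ 2 * (B * (∏ k ∈ Finset.range (m+1), specNorm (W k)) * (1 + 1/(m+1:ℕ))^(m+1) *
          ∑ k ∈ Finset.range (m+1), specNorm (ΔW k) / specNorm (W k)) := by
        have := hcol i; have := hcol j; linarith [hcol i, hcol j]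
    _ ≤ 2 * Real.exp 1 * B * (∏ k ∈ Finset.range (m+1), specNorm (W k)) *
          ∑ k ∈ Finset.range (m+1), specNorm (ΔW k) / specNorm (W k) := by
        have hnn2 : 0 ≤ B * (∏ k ∈ Finset.range (m+1), specNorm (W k)) *
            ∑ k ∈ Finset.range (m+1), specNorm (ΔW k) / specNorm (W k) :=
          mul_nonneg (mul_nonneg hB (hΦnn _)) (hSnn _)
        nlinarith [mul_le_mul_of_nonneg_right hce hnn2]

end
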